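/- Let p be an odd prime and F: V → F_{p^m} a vectorial dual-bent function satisfying Condition I with sign ε. Let D = {x ∈ V : F(x) is a nonsquare in F_{p^m}}, K = |D| = (p^n − ε p^{n/2})(p^m − 1)/(2 p^m), and for b ∈ V let c_b = (1/√K)(χ_b(x))_{x ∈ D} where χ_b(x) = ζ_p^{⟨b,x⟩}. Then for any two distinct b_1, b_2 ∈ V, the inner product c_{b_1} c_{b_2}^H equals either −((p^m−1)/(2 p^m K)) ε p^{n/2} or ((p^m+1)/(2 p^m K)) ε p^{n/2}; specifically, with b = b_1 − b_2, the first value occurs iff F^*(b) = 0 or F^*(b) is a nonzero square, and the second iff F^*(b) is a nonsquare. -/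

import Mathlib

open Complex Finset

/-- `ζ_p^k` for `k ∈ Z/p`. -/
noncomputable def zetaP (p : ℕ) (k : ZMod p) : ℂ :=
  Complex.exp (2 * Real.pi * Complex.I * (k.val : ℂ) / p)

section ZetaP
variable {p : ℕ} [Fact p.Prime]

lemma zetaP_eq (k : ZMod p) : zetaP p k = Complex.exp (2 * Real.pi * Complex.I / p) ^ (k.val) := by
  rw [← Complex.exp_nat_mul, zetaP]
  ring_nf

lemma zeta_pow_p : Complex.exp (2 * Real.pi * Complex.I / p) ^ p = 1 := by
  rw [← Complex.exp_nat_mul]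
  have hp : (p : ℂ) ≠ 0 := by
    exact_mod_cast (Fact.out (p := p.Prime)).pos.ne'
  have : (p : ℂ) * (2 * Real.pi * Complex.I / p) = 2 * Real.pi * Complex.I := by
    field_simp
  rw [this]
  simpa [mul_comm] using Complex.exp_two_pi_mul_I

lemma zeta_pow_mod (x : ℕ) : Complex.exp (2 * Real.pi * Complex.I / p) ^ (x % p)
    = Complex.exp (2 * Real.pi * Complex.I / p) ^ x := by
  conv_rhs => rw [← Nat.div_add_mod x p]
  rw [pow_add, pow_mul, zeta_pow_p, one_pow, one_mul]

lemma zetaP_zero : zetaP p 0 = 1 := by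
  simp [zetaP]

lemma zetaP_add (a b : ZMod p) : zetaP p (a + b) = zetaP p a * zetaP p b := by
  rw [zetaP_eq, zetaP_eq, zetaP_eq, ← pow_add, ZMod.val_add, zeta_pow_mod]

lemma zetaP_ne_zero (a : ZMod p) : zetaP p a ≠ 0 := Complex.exp_ne_zero _

lemma zetaP_neg (a : ZMod p) : zetaP p (-a) = (zetaP p a)⁻¹ := by
  have := zetaP_add (p := p) a (-a)
  rw [add_neg_cancel, zetaP_zero] at this
  exact eq_inv_of_mul_eq_one_right (by linear_combination -this)

lemma conj_zetaP (a : ZMod p) : (starRingEnd ℂ) (zetaP p a) = zetaP p (-a) := by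
  have h : (starRingEnd ℂ) ((2 : ℂ) * Real.pi * Complex.I * ((ZMod.val a : ℕ) : ℂ) / p)
      = -(2 * Real.pi * Complex.I * ((ZMod.val a : ℕ) : ℂ) / p) := by
    simp only [map_div₀, map_mul, Complex.conj_I, Complex.conj_natCast, map_ofNat,
      Complex.conj_ofReal]
    ring
  rw [zetaP, ← Complex.exp_conj, h, Complex.exp_neg, ← zetaP, zetaP_neg]

lemma zetaP_ne_one {a : ZMod p} (ha : a ≠ 0) : zetaP p a ≠ 1 := by
  intro h
  rw [zetaP, Complex.exp_eq_one_iff] at h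
  obtain ⟨n, hn⟩ := h
  have hp : (p : ℂ) ≠ 0 := by exact_mod_cast (Fact.out (p := p.Prime)).pos.ne'
  have hI : (Complex.I : ℂ) ≠ 0 := Complex.I_ne_zero
  have hπ : (Real.pi : ℂ) ≠ 0 := by exact_mod_cast Real.pi_ne_zero
  have key : ((a.val : ℂ)) = n * p := by
    have h2 : ((2 : ℂ) * Real.pi * Complex.I) ≠ 0 := by
      refine mul_ne_zero (mul_ne_zero two_ne_zero ?_) Complex.I_ne_zero
      exact_mod_cast Real.pi_ne_zero
    have h3 : (2 : ℂ) * Real.pi * Complex.I * (a.val : ℂ) = n * (2 * Real.pi * Complex.I) * p := by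
      field_simp at hn
      linear_combination (2 * (Real.pi : ℂ) * Complex.I) * hn
    exact mul_left_cancel₀ h2 (by linear_combination h3)
  have key2 : (a.val : ℤ) = n * p := by exact_mod_cast key
  have hdvd : (p : ℤ) ∣ (a.val : ℤ) := ⟨n, by linarith [key2]⟩
  have hdvd' : p ∣ a.val := Int.ofNat_dvd.mp (by exact_mod_cast hdvd)
  have hlt : a.val < p := a.val_lt
  have hpos : 0 < a.val := by
    rcases Nat.eq_zero_or_pos a.val with h | h
    · exact absurd (ZMod.val_eq_zero a |>.mp h) ha
    · exact h
  exact absurd (Nat.le_of_dvd hpos hdvd') (not_le.mpr hlt)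

end ZetaP

section Helpers
variable {p : ℕ} [Fact p.Prime]

-- generic vanishing of character sums
lemma sum_zetaP_eq_zero {A : Type*} [AddCommGroup A] [Fintype A]
    (φ : A → ZMod p) (hadd : ∀ x y, φ (x + y) = φ x + φ y) (v : A) (hv : φ v ≠ 0) :
    ∑ x : A, zetaP p (φ x) = 0 := by
  have h : zetaP p (φ v) * ∑ x : A, zetaP p (φ x) = ∑ x : A, zetaP p (φ x) := by
    rw [Finset.mul_sum]
    have h1 : ∀ x : A, zetaP p (φ v) * zetaP p (φ x) = zetaP p (φ (v + x)) := fun x => by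
      rw [hadd, zetaP_add]
    simp_rw [h1]
    exact Fintype.sum_equiv (Equiv.addLeft v) (fun x : A => zetaP p (φ (v + x)))
      (fun x : A => zetaP p (φ x)) (fun x => rfl)
  have h2 : (zetaP p (φ v) - 1) * ∑ x : A, zetaP p (φ x) = 0 := by
    rw [sub_mul, one_mul, h, sub_self]
  rcases mul_eq_zero.mp h2 with h3 | h3
  · exact absurd (by linear_combination h3) (zetaP_ne_one hv)
  · exact h3

variable {K : Type*} [Field K] [Fintype K] [DecidableEq K] [Algebra (ZMod p) K]

local notation "Tr" => Algebra.trace (ZMod p) K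

lemma trace_exists_ne_zero : ∃ z : K, Tr z ≠ 0 := by
  have : FiniteDimensional (ZMod p) K := Module.Finite.of_finite
  obtain ⟨z, hz⟩ := DFunLike.ne_iff.mp (Algebra.trace_ne_zero (ZMod p) K)
  exact ⟨z, by simpa using hz⟩

lemma orth (y : K) :
    ∑ c : K, zetaP p (Tr (c * y)) = if y = 0 then (Fintype.card K : ℂ) else 0 := by
  by_cases hy : y = 0
  · simp [hy, zetaP_zero]
  · rw [if_neg hy]
    obtain ⟨z, hz⟩ := trace_exists_ne_zero (p := p) (K := K)
    refine sum_zetaP_eq_zero (fun c => Tr (c * y)) (fun a b => by simp [add_mul, map_add])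
      (z * y⁻¹) ?_
    simpa [mul_assoc, inv_mul_cancel₀ hy] using hz

lemma orth' (y : K) :
    ∑ c ∈ univ.erase (0 : K), zetaP p (Tr (c * y))
      = if y = 0 then (Fintype.card K : ℂ) - 1 else -1 := by
  have h := Finset.add_sum_erase univ (fun c : K => zetaP p (Tr (c * y))) (mem_univ 0)
  rw [orth] at h
  have h0 : zetaP p (Tr ((0 : K) * y)) = 1 := by rw [zero_mul, map_zero, zetaP_zero]
  by_cases hy : y = 0
  · rw [if_pos hy] at h ⊢; rw [h0] at h; linear_combination h
  · rw [if_neg hy] at h ⊢; rw [h0] at h; linear_combination h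

/-- the complex-valued quadratic character -/
noncomputable def etaC (K : Type*) [Field K] [Fintype K] [DecidableEq K] : K → ℂ :=
  fun y => ((quadraticChar K y : ℤ) : ℂ)

variable (hp2 : p ≠ 2)

lemma ringChar_eq : ringChar K = p := by
  have h1 : CharP K p := charP_of_injective_ringHom (algebraMap (ZMod p) K).injective p
  exact (ringChar.eq K p).symm ▸ rfl

lemma etaC_zero : etaC K 0 = 0 := by simp [etaC]

lemma etaC_mul (y z : K) : etaC K (y * z) = etaC K y * etaC K z := by
  simp [etaC, map_mul]

lemma etaC_eq_one {y : K} (hy : y ≠ 0) (hsq : IsSquare y) : etaC K y = 1 := by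
  simp [etaC, (quadraticChar_one_iff_isSquare hy).mpr hsq]

lemma etaC_eq_neg_one {y : K} (hsq : ¬ IsSquare y) : etaC K y = -1 := by
  simp [etaC, quadraticChar_neg_one_iff_not_isSquare.mpr hsq]

lemma etaC_pm {y : K} (hy : y ≠ 0) : etaC K y = 1 ∨ etaC K y = -1 := by
  by_cases h : IsSquare y
  · exact Or.inl (etaC_eq_one hy h)
  · exact Or.inr (etaC_eq_neg_one h)

lemma etaC_inv (y : K) : etaC K y⁻¹ = etaC K y := by
  by_cases hy : y = 0
  · simp [hy]
  · have h1 : etaC K y * etaC K y⁻¹ = 1 := by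
      rw [← etaC_mul, mul_inv_cancel₀ hy]
      simp [etaC]
    rcases etaC_pm (K := K) hy with h | h
    · rw [h] at h1 ⊢; linear_combination h1
    · rw [h] at h1 ⊢; linear_combination -h1

include hp2 in
lemma etaC_sum : ∑ y : K, etaC K y = 0 := by
  have h := quadraticChar_sum_zero (F := K) (by rw [ringChar_eq (p := p)]; exact hp2)
  have h2 := congrArg (Int.cast : ℤ → ℂ) h
  push_cast at h2
  simpa [etaC] using h2

lemma etaC_zpow {d : ℕ} (hd : 2 ≤ d) (hdeven : Even d) (c : K) (hc : c ≠ 0) :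
    etaC K (c ^ ((1 : ℤ) - d)) = etaC K c := by
  have hodd : Odd (d - 1) := Nat.Even.sub_odd (by omega) hdeven odd_one
  have he : (1 : ℤ) - d = -((d - 1 : ℕ) : ℤ) := by push_cast [Nat.cast_sub (by omega : 1 ≤ d)]; ring
  rw [he, zpow_neg, zpow_natCast, etaC_inv]
  have hpow : etaC K (c ^ (d - 1)) = (etaC K c) ^ (d - 1) := by
    rw [etaC, etaC, map_pow]
    push_cast
    ring
  rw [hpow]
  rcases etaC_pm (K := K) hc with h | h <;> rw [h]
  · exact one_pow _
  · exact hodd.neg_one_pow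

/-- the additive character `y ↦ ζ_p^{Tr y}` -/
noncomputable def psiK (p : ℕ) [Fact p.Prime] (K : Type*) [Field K] [Fintype K]
    [Algebra (ZMod p) K] : AddChar K ℂ where
  toFun := fun y => zetaP p (Algebra.trace (ZMod p) K y)
  map_zero_eq_one' := by simp [map_zero, zetaP_zero]
  map_add_eq_mul' := fun a b => by simp [map_add, zetaP_add]

noncomputable def chiC (K : Type*) [Field K] [Fintype K] [DecidableEq K] : MulChar K ℂ :=
  (quadraticChar K).ringHomComp (Int.castRingHom ℂ)

lemma gauss_eq : gaussSum (chiC K) (psiK p K)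
    = ∑ c : K, etaC K c * zetaP p (Tr c) := by
  rfl

include hp2 in
lemma gauss_ne_zero : (∑ c : K, etaC K c * zetaP p (Tr c)) ≠ 0 := by
  rw [← gauss_eq]
  have hcard : ((Fintype.card K : ℂ)) ≠ 0 := by
    exact_mod_cast Fintype.card_pos.ne'
  have hχ : chiC K ≠ 1 :=
    (MulChar.ringHomComp_ne_one_iff Int.cast_injective).mpr
      (quadraticChar_ne_one (by rw [ringChar_eq (p := p)]; exact hp2))
  have hψ : (psiK p K).IsPrimitive := by
    apply AddChar.IsPrimitive.of_ne_one
    obtain ⟨z, hz⟩ := trace_exists_ne_zero (p := p) (K := K)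
    intro h1
    have := congrFun (congrArg (fun f : AddChar K ℂ => (f : K → ℂ)) h1) z
    simp only [AddChar.one_apply] at this
    exact zetaP_ne_one hz (by exact this)
  exact gaussSum_ne_zero_of_nontrivial hcard hχ hψ

include hp2 in
lemma etaC_shift (y : K) : ∑ c : K, etaC K c * zetaP p (Tr (c * y))
    = etaC K y * ∑ c : K, etaC K c * zetaP p (Tr c) := by
  by_cases hy : y = 0
  · rw [hy, etaC_zero, zero_mul]
    have : ∀ c : K, etaC K c * zetaP p (Tr (c * 0)) = etaC K c := by
      intro c; rw [mul_zero, map_zero, zetaP_zero, mul_one]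
    simp_rw [this]
    exact etaC_sum hp2
  · have step : ∑ c : K, etaC K c * zetaP p (Tr (c * y))
        = ∑ c : K, etaC K (y⁻¹ * c) * zetaP p (Tr c) := by
      refine Fintype.sum_equiv (Equiv.mulLeft₀ y hy)
        (fun c => etaC K c * zetaP p (Tr (c * y)))
        (fun c => etaC K (y⁻¹ * c) * zetaP p (Tr c)) (fun c => ?_)
      show etaC K c * zetaP p (Tr (c * y)) = etaC K (y⁻¹ * (y * c)) * zetaP p (Tr (y * c))
      rw [inv_mul_cancel_left₀ hy, mul_comm c y]
    rw [step]
    have : ∀ c : K, etaC K (y⁻¹ * c) * zetaP p (Tr c)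
        = etaC K y * (etaC K c * zetaP p (Tr c)) := by
      intro c; rw [etaC_mul, etaC_inv]; ring
    simp_rw [this, ← Finset.mul_sum]

lemma sum_zpow_reindex (d : ℕ) (hd : 2 ≤ d)
    (hgcd : Nat.gcd (d - 1) (Fintype.card K - 1) = 1) (f : K → ℂ) :
    ∑ c ∈ univ.erase (0 : K), f (c ^ ((1 : ℤ) - d))
      = ∑ c ∈ univ.erase (0 : K), f c := by
  have he : ∀ c : K, c ^ ((1 : ℤ) - d) = (c ^ (d - 1))⁻¹ := by
    intro c
    have h1 : (1 : ℤ) - d = -((d - 1 : ℕ) : ℤ) := by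
      push_cast [Nat.cast_sub (by omega : 1 ≤ d)]; ring
    rw [h1, zpow_neg, zpow_natCast]
  have hmaps : ∀ a ∈ univ.erase (0 : K), a ^ ((1 : ℤ) - d) ∈ univ.erase (0 : K) := by
    intro a ha
    rw [mem_erase] at ha ⊢
    exact ⟨zpow_ne_zero _ ha.1, mem_univ _⟩
  have hinj : ∀ a ∈ univ.erase (0 : K), ∀ b ∈ univ.erase (0 : K),
      a ^ ((1 : ℤ) - d) = b ^ ((1 : ℤ) - d) → a = b := by
    intro a ha b hb hab
    rw [mem_erase] at ha hb
    have ha0 : a ≠ 0 := ha.1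
    have hb0 : b ≠ 0 := hb.1
    rw [he, he, inv_inj] at hab
    have hu : (a * b⁻¹) ^ (d - 1) = 1 := by
      rw [mul_pow, inv_pow, hab, mul_inv_cancel₀ (pow_ne_zero _ hb0)]
    have hu2 : (a * b⁻¹) ^ (Fintype.card K - 1) = 1 :=
      FiniteField.pow_card_sub_one_eq_one _ (mul_ne_zero ha0 (inv_ne_zero hb0))
    have hord : orderOf (a * b⁻¹) ∣ 1 := by
      rw [← hgcd]
      exact Nat.dvd_gcd (orderOf_dvd_of_pow_eq_one hu) (orderOf_dvd_of_pow_eq_one hu2)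
    have h1 : a * b⁻¹ = 1 := orderOf_eq_one_iff.mp (Nat.dvd_one.mp hord)
    field_simp at h1
    exact h1
  refine Finset.sum_nbij (fun c => c ^ ((1 : ℤ) - d)) hmaps ?_ ?_ ?_
  · intro a ha b hb hab
    simp only at hab
    exact hinj a (by rwa [← mem_coe]) b (by rwa [← mem_coe]) hab
  · intro b hb
    rw [mem_coe] at hb
    obtain ⟨a, ha, hab⟩ := Finset.surj_on_of_inj_on_of_card_le
      (fun (c : K) (_ : c ∈ univ.erase (0 : K)) => c ^ ((1 : ℤ) - d))
      (fun a ha => hmaps a ha) (fun a₁ a₂ h₁ h₂ heq => hinj a₁ h₁ a₂ h₂ heq)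
      (le_refl _) b hb
    exact ⟨a, mem_coe.mpr ha, hab.symm⟩
  · intro a _
    rfl

end Helpers

/-- Under Condition I with sign `ε`, let `D = {x ∈ V : F(x) nonsquare}`,
`K₀ = |D| = (p^n - ε p^{n/2})(p^m - 1)/(2 p^m)`, and for `b ∈ V` let
`c_b = (1/√K₀)(χ_b(x))_{x ∈ D}`.  For distinct `b₁, b₂`, the inner product
`c_{b₁} c_{b₂}^H = (1/K₀) Σ_{x ∈ D} χ_{b₁}(x) conj(χ_{b₂}(x))` equals
`-((p^m-1)/(2 p^m K₀)) ε p^{n/2}` if `F^*(b₁-b₂) = 0` or a nonzero square,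
and `((p^m+1)/(2 p^m K₀)) ε p^{n/2}` if `F^*(b₁-b₂)` is a nonsquare. -/
theorem codebook_inner_product_condI
    (p n m d : ℕ) [Fact p.Prime] (hp : p ≠ 2)
    (hm : 1 ≤ m) (hn : Even n) (hmn : 2 * m ≤ n)
    (V : Type*) [AddCommGroup V] [Module (ZMod p) V] [Fintype V]
    (hV : Fintype.card V = p ^ n)
    (K : Type*) [Field K] [Fintype K] [DecidableEq K] [Algebra (ZMod p) K]
    (hK : Fintype.card K = p ^ m)
    (B : V →ₗ[ZMod p] V →ₗ[ZMod p] ZMod p)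
    (hBsym : ∀ v w, B v w = B w v)
    (hBnd : ∀ v, (∀ w, B v w = 0) → v = 0)
    (F Fstar : V → K)
    (ε : ℤ) (hε : ε = 1 ∨ ε = -1)
    (hd : 2 ≤ d) (hdeven : Even d)
    (hgcd : Nat.gcd (d - 1) (p ^ m - 1) = 1)
    (hF0 : F 0 = 0) (hFstar0 : Fstar 0 = 0)
    (hFstarneg : ∀ a : V, Fstar (-a) = Fstar a)
    (hWalsh : ∀ c : K, c ≠ 0 → ∀ a : V,
      ∑ x : V, zetaP p (Algebra.trace (ZMod p) K (c * F x) - B a x)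
        = (ε : ℂ) * (p : ℂ) ^ (n / 2)
            * zetaP p (Algebra.trace (ZMod p) K (c ^ ((1 : ℤ) - d) * Fstar a)))
    (b₁ b₂ : V) (hb : b₁ ≠ b₂) :
    (2 * (p : ℤ) ^ m *
        ((Finset.univ.filter (fun x : V => ¬ IsSquare (F x))).card : ℤ)
      = ((p : ℤ) ^ n - ε * (p : ℤ) ^ (n / 2)) * ((p : ℤ) ^ m - 1))
    ∧ ((Fstar (b₁ - b₂) = 0 ∨
          (IsSquare (Fstar (b₁ - b₂)) ∧ Fstar (b₁ - b₂) ≠ 0)) →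
      (1 / (((Finset.univ.filter (fun x : V => ¬ IsSquare (F x))).card : ℂ))) *
          ∑ x ∈ Finset.univ.filter (fun x : V => ¬ IsSquare (F x)),
            zetaP p (B b₁ x) * (starRingEnd ℂ) (zetaP p (B b₂ x))
        = -((((p : ℂ) ^ m - 1) /
              (2 * (p : ℂ) ^ m *
                ((Finset.univ.filter (fun x : V => ¬ IsSquare (F x))).card : ℂ)))
            * (ε : ℂ) * (p : ℂ) ^ (n / 2)))
    ∧ (¬ IsSquare (Fstar (b₁ - b₂)) →
      (1 / (((Finset.univ.filter (fun x : V => ¬ IsSquare (F x))).card : ℂ))) *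
          ∑ x ∈ Finset.univ.filter (fun x : V => ¬ IsSquare (F x)),
            zetaP p (B b₁ x) * (starRingEnd ℂ) (zetaP p (B b₂ x))
        = (((p : ℂ) ^ m + 1) /
              (2 * (p : ℂ) ^ m *
                ((Finset.univ.filter (fun x : V => ¬ IsSquare (F x))).card : ℂ)))
            * (ε : ℂ) * (p : ℂ) ^ (n / 2)) := by
  have hpC : (p : ℂ) ≠ 0 := by
    exact_mod_cast (Fact.out (p := p.Prime)).pos.ne'
  have hqC : ((p : ℂ) ^ m) ≠ 0 := pow_ne_zero _ hpC
  have hcardK : ((Fintype.card K : ℕ) : ℂ) = (p : ℂ) ^ m := by exact_mod_cast hK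
  have hgcd' : Nat.gcd (d - 1) (Fintype.card K - 1) = 1 := by rw [hK]; exact hgcd
  set P : ℂ := (ε : ℂ) * (p : ℂ) ^ (n / 2) with hP
  -- rearranged Walsh transform
  have W : ∀ (b : V) (c : K), c ≠ 0 →
      ∑ x : V, zetaP p (Algebra.trace (ZMod p) K (c * F x)) * zetaP p (B b x)
        = P * zetaP p (Algebra.trace (ZMod p) K (c ^ ((1 : ℤ) - d) * Fstar b)) := by
    intro b c hc
    have h := hWalsh c hc (-b)
    rw [hFstarneg] at h
    rw [← h]
    refine Finset.sum_congr rfl (fun x _ => ?_)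
    have hB : (B (-b)) x = -(B b x) := by simp [map_neg]
    rw [hB, sub_neg_eq_add, zetaP_add]
  -- the hybrid sum S₁
  have S1 : ∀ b : V, ∑ x : V, etaC K (F x) * zetaP p (B b x) = P * etaC K (Fstar b) := by
    intro b
    have hG := gauss_ne_zero (p := p) (K := K) hp
    apply mul_left_cancel₀ hG
    calc (∑ c : K, etaC K c * zetaP p (Algebra.trace (ZMod p) K c))
          * ∑ x : V, etaC K (F x) * zetaP p (B b x)
        = ∑ x : V, (∑ c : K, etaC K c * zetaP p (Algebra.trace (ZMod p) K (c * F x)))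
            * zetaP p (B b x) := by
          rw [Finset.mul_sum]
          refine Finset.sum_congr rfl (fun x _ => ?_)
          rw [etaC_shift (p := p) hp (F x)]
          ring
      _ = ∑ c : K, etaC K c
            * ∑ x : V, zetaP p (Algebra.trace (ZMod p) K (c * F x)) * zetaP p (B b x) := by
          simp_rw [Finset.sum_mul]
          rw [Finset.sum_comm]
          refine Finset.sum_congr rfl (fun c _ => ?_)
          rw [Finset.mul_sum]
          exact Finset.sum_congr rfl (fun x _ => by ring)
      _ = ∑ c ∈ univ.erase (0 : K), etaC K c
            * ∑ x : V, zetaP p (Algebra.trace (ZMod p) K (c * F x)) * zetaP p (B b x) := by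
          rw [Finset.sum_erase]
          rw [etaC_zero, zero_mul]
      _ = ∑ c ∈ univ.erase (0 : K),
            P * (etaC K (c ^ ((1 : ℤ) - d))
              * zetaP p (Algebra.trace (ZMod p) K (c ^ ((1 : ℤ) - d) * Fstar b))) := by
          refine Finset.sum_congr rfl (fun c hc => ?_)
          rw [mem_erase] at hc
          rw [W b c hc.1, etaC_zpow hd hdeven c hc.1]
          ring
      _ = P * ∑ c ∈ univ.erase (0 : K),
            etaC K c * zetaP p (Algebra.trace (ZMod p) K (c * Fstar b)) := by
          rw [← Finset.mul_sum]
          congr 1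
          exact sum_zpow_reindex d hd hgcd'
            (fun c => etaC K c * zetaP p (Algebra.trace (ZMod p) K (c * Fstar b)))
      _ = P * ∑ c : K, etaC K c * zetaP p (Algebra.trace (ZMod p) K (c * Fstar b)) := by
          congr 1
          rw [Finset.sum_erase]
          rw [etaC_zero, zero_mul]
      _ = (∑ c : K, etaC K c * zetaP p (Algebra.trace (ZMod p) K c))
            * (P * etaC K (Fstar b)) := by
          rw [etaC_shift (p := p) hp (Fstar b)]
          ring
  -- the partial exponential sum over the zero set of F
  have Tval : ∀ b : V, (p : ℂ) ^ m
        * ∑ x ∈ univ.filter (fun x : V => F x = 0), zetaP p (B b x)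
      = (∑ x : V, zetaP p (B b x))
        + P * (if Fstar b = 0 then (p : ℂ) ^ m - 1 else -1) := by
    intro b
    calc (p : ℂ) ^ m * ∑ x ∈ univ.filter (fun x : V => F x = 0), zetaP p (B b x)
        = ∑ x : V, (∑ c : K, zetaP p (Algebra.trace (ZMod p) K (c * F x)))
            * zetaP p (B b x) := by
          rw [Finset.sum_filter, Finset.mul_sum]
          refine Finset.sum_congr rfl (fun x _ => ?_)
          rw [orth (F x), hcardK]
          split_ifs <;> ring
      _ = ∑ c : K, ∑ x : V, zetaP p (Algebra.trace (ZMod p) K (c * F x))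
            * zetaP p (B b x) := by
          simp_rw [Finset.sum_mul]
          exact Finset.sum_comm
      _ = (∑ x : V, zetaP p (Algebra.trace (ZMod p) K ((0 : K) * F x)) * zetaP p (B b x))
          + ∑ c ∈ univ.erase (0 : K), ∑ x : V,
              zetaP p (Algebra.trace (ZMod p) K (c * F x)) * zetaP p (B b x) :=
          (Finset.add_sum_erase univ _ (mem_univ (0 : K))).symm
      _ = (∑ x : V, zetaP p (B b x))
          + P * ∑ c ∈ univ.erase (0 : K),
              zetaP p (Algebra.trace (ZMod p) K (c ^ ((1 : ℤ) - d) * Fstar b)) := by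
          congr 1
          · refine Finset.sum_congr rfl (fun x _ => ?_)
            rw [zero_mul, map_zero, zetaP_zero, one_mul]
          · rw [Finset.mul_sum]
            refine Finset.sum_congr rfl (fun c hc => ?_)
            rw [mem_erase] at hc
            exact W b c hc.1
      _ = (∑ x : V, zetaP p (B b x))
          + P * (if Fstar b = 0 then (p : ℂ) ^ m - 1 else -1) := by
          congr 1
          rw [sum_zpow_reindex d hd hgcd'
            (fun c => zetaP p (Algebra.trace (ZMod p) K (c * Fstar b)))]
          rw [orth' (Fstar b), hcardK]
  -- pointwise indicator identity
  have ind : ∀ y : K, (if ¬ IsSquare y then (2 : ℂ) else 0)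
      = 1 - (if y = 0 then (1 : ℂ) else 0) - etaC K y := by
    intro y
    by_cases h0 : y = 0
    · subst h0
      rw [if_pos rfl, etaC_zero, if_neg (by simp : ¬ ¬ IsSquare (0 : K))]
      ring
    · rw [if_neg h0]
      by_cases hsq : IsSquare y
      · rw [if_neg (by simpa using hsq), etaC_eq_one h0 hsq]
        ring
      · rw [if_pos hsq, etaC_eq_neg_one hsq]
        ring
  -- the master identity
  have master : ∀ b : V,
      (2 : ℂ) * (p : ℂ) ^ m
          * ∑ x ∈ univ.filter (fun x : V => ¬ IsSquare (F x)), zetaP p (B b x)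
        = (p : ℂ) ^ m * (∑ x : V, zetaP p (B b x))
          - ((∑ x : V, zetaP p (B b x))
              + P * (if Fstar b = 0 then (p : ℂ) ^ m - 1 else -1))
          - (p : ℂ) ^ m * (P * etaC K (Fstar b)) := by
    intro b
    have key : (2 : ℂ) * ∑ x ∈ univ.filter (fun x : V => ¬ IsSquare (F x)), zetaP p (B b x)
        = (∑ x : V, zetaP p (B b x))
          - (∑ x ∈ univ.filter (fun x : V => F x = 0), zetaP p (B b x))
          - ∑ x : V, etaC K (F x) * zetaP p (B b x) := by
      rw [Finset.sum_filter, Finset.sum_filter, Finset.mul_sum, ← Finset.sum_sub_distrib,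
        ← Finset.sum_sub_distrib]
      refine Finset.sum_congr rfl (fun x _ => ?_)
      have h := ind (F x)
      calc (2 : ℂ) * (if ¬ IsSquare (F x) then zetaP p (B b x) else 0)
          = (if ¬ IsSquare (F x) then (2 : ℂ) else 0) * zetaP p (B b x) := by
            split_ifs <;> ring
        _ = (1 - (if F x = 0 then (1 : ℂ) else 0) - etaC K (F x)) * zetaP p (B b x) := by
            rw [h]
        _ = zetaP p (B b x) - (if F x = 0 then zetaP p (B b x) else 0)
            - etaC K (F x) * zetaP p (B b x) := by
            split_ifs <;> ring
    calc (2 : ℂ) * (p : ℂ) ^ m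
          * ∑ x ∈ univ.filter (fun x : V => ¬ IsSquare (F x)), zetaP p (B b x)
        = (p : ℂ) ^ m
          * ((2 : ℂ) * ∑ x ∈ univ.filter (fun x : V => ¬ IsSquare (F x)), zetaP p (B b x)) := by
          ring
      _ = (p : ℂ) ^ m * (∑ x : V, zetaP p (B b x))
          - (p : ℂ) ^ m * (∑ x ∈ univ.filter (fun x : V => F x = 0), zetaP p (B b x))
          - (p : ℂ) ^ m * ∑ x : V, etaC K (F x) * zetaP p (B b x) := by
          rw [key]; ring
      _ = _ := by rw [Tval b, S1 b]
  -- Part 1 : the cardinality of D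
  have hB0 : ∀ x : V, (B (0 : V)) x = (0 : ZMod p) := by
    intro x; rw [map_zero]; rfl
  have part1C : (2 : ℂ) * (p : ℂ) ^ m
      * ((univ.filter (fun x : V => ¬ IsSquare (F x))).card : ℂ)
      = ((p : ℂ) ^ n - (ε : ℂ) * (p : ℂ) ^ (n / 2)) * ((p : ℂ) ^ m - 1) := by
    have h0 := master 0
    rw [hFstar0] at h0
    simp only [hB0, zetaP_zero, if_pos rfl, etaC_zero, mul_zero] at h0
    rw [Finset.sum_const, Finset.sum_const, Finset.card_univ, hV] at h0
    simp only [nsmul_eq_mul, mul_one] at h0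
    push_cast at h0
    rw [h0]
    ring
  have part1 : 2 * (p : ℤ) ^ m
      * ((Finset.univ.filter (fun x : V => ¬ IsSquare (F x))).card : ℤ)
      = ((p : ℤ) ^ n - ε * (p : ℤ) ^ (n / 2)) * ((p : ℤ) ^ m - 1) := by
    have := part1C
    exact_mod_cast this
  -- Parts 2 and 3
  have hb0 : b₁ - b₂ ≠ 0 := sub_ne_zero.mpr hb
  have hA : ∑ x : V, zetaP p (B (b₁ - b₂) x) = 0 := by
    have hvex : ∃ w, B (b₁ - b₂) w ≠ 0 := by
      by_contra h
      push_neg at h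
      exact hb0 (hBnd _ h)
    obtain ⟨v, hv⟩ := hvex
    exact sum_zetaP_eq_zero (fun x => B (b₁ - b₂) x) (fun x y => by simp [map_add]) v hv
  have hconv : ∑ x ∈ Finset.univ.filter (fun x : V => ¬ IsSquare (F x)),
        zetaP p (B b₁ x) * (starRingEnd ℂ) (zetaP p (B b₂ x))
      = ∑ x ∈ univ.filter (fun x : V => ¬ IsSquare (F x)), zetaP p (B (b₁ - b₂) x) := by
    refine Finset.sum_congr rfl (fun x _ => ?_)
    rw [conj_zetaP, ← zetaP_add]
    congr 1
    simp [map_sub, sub_eq_add_neg]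
  have h2q : (2 : ℂ) * (p : ℂ) ^ m ≠ 0 := mul_ne_zero two_ne_zero hqC
  have hmain := master (b₁ - b₂)
  rw [hA] at hmain
  refine ⟨part1, fun hcase => ?_, fun hcase => ?_⟩
  · -- square or zero case
    have hS : ∑ x ∈ univ.filter (fun x : V => ¬ IsSquare (F x)), zetaP p (B (b₁ - b₂) x)
        = -(P * ((p : ℂ) ^ m - 1)) / (2 * (p : ℂ) ^ m) := by
      rw [eq_div_iff h2q]
      rcases hcase with hz | ⟨hsq, hnz⟩
      · rw [hz, if_pos rfl, etaC_zero] at hmain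
        linear_combination hmain
      · rw [if_neg hnz, etaC_eq_one hnz hsq] at hmain
        linear_combination hmain
    rw [hconv, hS, hP]
    ring
  · -- nonsquare case
    have hnz : Fstar (b₁ - b₂) ≠ 0 := by
      intro h
      exact hcase (h ▸ (⟨0, by simp⟩ : IsSquare (0 : K)))
    have hS : ∑ x ∈ univ.filter (fun x : V => ¬ IsSquare (F x)), zetaP p (B (b₁ - b₂) x)
        = (P * ((p : ℂ) ^ m + 1)) / (2 * (p : ℂ) ^ m) := by
      rw [eq_div_iff h2q]
      rw [if_neg hnz, etaC_eq_neg_one hcase] at hmain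
      linear_combination hmain
    rw [hconv, hS, hP]
    ring
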